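/- Assume that the Baire space ℕ → ℕ (with the product topology) is the union of a family of at most ℵ₁ many compact subsets. Then there exist a subset E of the Cantor space 2^ℕ with |E| = ℵ₁ and a family 𝒦 of compact subsets of 2^ℕ with |𝒦| ≤ ℵ₁ such that the complement 2^ℕ \ E equals the union of 𝒦. -/

import Mathlib

open Set

/-- An index type of cardinality `ℵ₁`: the countable ordinals. -/
abbrev Omega1Index : Type 1 := {o : Ordinal // o < Ordinal.omega 1}

lemma omega1_mk :
    Cardinal.mk Omega1Index = Cardinal.lift.{1,0} (Cardinal.aleph (1 : Ordinal.{0})) := by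
  have : Cardinal.mk (Set.Iio (Ordinal.omega (1 : Ordinal.{0}))) =
      Cardinal.lift.{1,0} ((Ordinal.omega (1 : Ordinal.{0})).card) := Ordinal.mk_Iio_ordinal _
  set_option linter.unnecessarySimpa false in
  rw [Ordinal.card_omega] at this; exact this

lemma countable_Iio_omega1 {b : Ordinal} (hb : b < Ordinal.omega 1) :
    (Set.Iio b).Countable := by
  rw [Cardinal.countable_iff_lt_aleph_one, Ordinal.mk_Iio_ordinal,
    Cardinal.lift_lt_aleph_one]
  rw [← Cardinal.ord_aleph, Cardinal.lt_ord] at hb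
  exact hb

lemma countable_le_omega1 (b : Omega1Index) :
    {α : Omega1Index | α.val ≤ b.val}.Countable := by
  have h1 : (Set.Iio (Order.succ b.val)).Countable := by
    refine countable_Iio_omega1 ?_
    exact (Cardinal.isSuccLimit_omega 1).succ_lt b.2
  have h2 : {α : Omega1Index | α.val ≤ b.val} ⊆ Subtype.val ⁻¹' (Set.Iio (Order.succ b.val)) := by
    intro α hα
    simp only [Set.mem_preimage, Set.mem_Iio]
    exact Order.lt_succ_iff.2 hα
  exact (h1.preimage Subtype.val_injective).mono h2

lemma countable_lt_omega1 (b : Omega1Index) :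
    {α : Omega1Index | α.val < b.val}.Countable := by
  have hsub : {α : Omega1Index | α.val < b.val} ⊆ {α : Omega1Index | α.val ≤ b.val} := by
    intro α hα
    show α.val ≤ b.val
    exact le_of_lt hα
  exact (countable_le_omega1 b).mono hsub

/-- Every point of the Cantor space is a limit of other points. -/
lemma dense_compl_singleton_cantor (d : ℕ → Bool) :
    Dense ({d}ᶜ : Set (ℕ → Bool)) := by
  intro x
  rcases eq_or_ne x d with rfl | hne
  · have htend : Filter.Tendsto (fun n => Function.update x n (!(x n)))
        Filter.atTop (nhds x) := by
      rw [tendsto_pi_nhds]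
      intro k
      refine Filter.Tendsto.congr' ?_ tendsto_const_nhds
      filter_upwards [Filter.eventually_ge_atTop (k + 1)] with n hn
      exact (Function.update_of_ne (by omega) _ _).symm
    refine mem_closure_of_tendsto htend ?_
    filter_upwards with n
    intro h
    have := congrFun (Set.eq_of_mem_singleton h) n
    simp at this
  · exact subset_closure hne

/-- Key lemma: assuming the Baire space is covered by `ℵ₁` compacts, every Gδ subset of
the Cantor space is the union of `ℵ₁` compacts. -/
lemma exists_omega1_compact_cover (K : Omega1Index → Set (ℕ → ℕ))
    (hKc : ∀ i, IsCompact (K i)) (hKu : (⋃ i, K i) = Set.univ)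
    {s : Set (ℕ → Bool)} (hs : IsGδ s) :
    ∃ T : Omega1Index → Set (ℕ → Bool),
      (∀ i, IsCompact (T i)) ∧ (∀ i, T i ⊆ s) ∧ (⋃ i, T i) = s := by
  rcases s.eq_empty_or_nonempty with rfl | hne
  · exact ⟨fun _ => ∅, fun _ => isCompact_empty, fun _ => Set.empty_subset _, by simp⟩
  obtain ⟨U, hUo, hsU⟩ := hs.eq_iInter_nat
  haveI : PolishSpace (ℕ → Bool) := {}
  have hclop : PolishSpace.IsClopenable s := by
    have h1 : s = (⋃ n, (U n)ᶜ)ᶜ := by simp [hsU]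
    rw [h1]
    exact (PolishSpace.IsClopenable.iUnion fun n => ((hUo n).isClopenable).compl).compl
  obtain ⟨t', ht'le, ht'p, hs_closed, -⟩ := hclop
  have ps : @PolishSpace s (@instTopologicalSpaceSubtype _ _ t') :=
    @IsClosed.polishSpace _ t' ht'p _ hs_closed
  haveI hne' : Nonempty s := hne.to_subtype
  obtain ⟨f, hf_cont, hf_surj⟩ :=
    @PolishSpace.exists_nat_nat_continuous_surjective s (@instTopologicalSpaceSubtype _ _ t') ps hne'
  refine ⟨fun i => Subtype.val '' (f '' K i), ?_, ?_, ?_⟩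
  · intro i
    have h1 : @IsCompact s (@instTopologicalSpaceSubtype _ _ t') (f '' K i) :=
      (hKc i).image hf_cont
    have h2 : @IsCompact _ t' (Subtype.val '' (f '' K i)) :=
      h1.image (@continuous_subtype_val _ t' _)
    have hid : @Continuous _ _ t' Pi.topologicalSpace id :=
      (@continuous_id_iff_le (ℕ → Bool) t' Pi.topologicalSpace).2 ht'le
    have h3 : @IsCompact (ℕ → Bool) Pi.topologicalSpace (id '' (Subtype.val '' (f '' K i))) :=
      @IsCompact.image (ℕ → Bool) (ℕ → Bool) t' Pi.topologicalSpace _ id h2 hid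
    simpa using h3
  · intro i
    exact Subtype.coe_image_subset _ _
  · rw [← Set.image_iUnion, ← Set.image_iUnion, hKu, Set.image_univ,
      hf_surj.range_eq, Set.image_univ, Subtype.range_coe]

instance : Filter.IsCountablyGenerated (uniformity Bool) := by
  have h : (uniformity Bool) = Filter.principal SetRel.id := bot_uniformity
  rw [h]
  infer_instance

/-- Avoidance lemma: a countable family of closed sets with dense complements together
with a countable set cannot cover the Cantor space. -/
lemma exists_avoid {ι : Type*} [Countable ι] (C : ι → Set (ℕ → Bool))
    (hC : ∀ i, IsClosed (C i)) (hCd : ∀ i, Dense (C i)ᶜ)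
    (D : Set (ℕ → Bool)) (hD : D.Countable) :
    ∃ y, y ∉ D ∧ ∀ i, y ∉ C i := by
  have hres : ((⋂ i, (C i)ᶜ) ∩ ⋂ d ∈ D, ({d}ᶜ : Set (ℕ → Bool))) ∈ residual (ℕ → Bool) := by
    refine Filter.inter_mem ?_ ?_
    · rw [countable_iInter_mem]
      intro i
      exact mem_residual.2 ⟨(C i)ᶜ, subset_rfl, (hC i).isOpen_compl.isGδ, hCd i⟩
    · rw [countable_bInter_mem hD]
      intro d _
      exact mem_residual.2 ⟨({d}ᶜ : Set (ℕ → Bool)), subset_rfl,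
        isClosed_singleton.isOpen_compl.isGδ, dense_compl_singleton_cantor d⟩
  obtain ⟨y, hy⟩ := (dense_of_mem_residual hres).nonempty
  refine ⟨y, ?_, ?_⟩
  · intro hyD
    have := hy.2
    simp only [Set.mem_iInter] at this
    exact this y hyD rfl
  · intro i
    have := hy.1
    simp only [Set.mem_iInter, Set.mem_compl_iff] at this
    exact this i

/-- If the Baire space `ℕ → ℕ` is the union of at most `ℵ₁` many compact sets (i.e.
`𝔡 = ℵ₁`), then there are a subset `E` of the Cantor space of cardinality `ℵ₁` and a
family `𝒦` of at most `ℵ₁` many compact subsets of the Cantor space whose union is the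
complement of `E`. -/
theorem cantor_complement_of_d_eq_aleph_one
    (hd : ∃ K : Omega1Index → Set (ℕ → ℕ), (∀ i, IsCompact (K i)) ∧
      (⋃ i, K i) = Set.univ) :
    ∃ E : Set (ℕ → Bool), Cardinal.mk E = Cardinal.aleph 1 ∧
      ∃ 𝒦 : Set (Set (ℕ → Bool)), Cardinal.mk 𝒦 ≤ Cardinal.aleph 1 ∧
        (∀ K ∈ 𝒦, IsCompact K) ∧ ⋃₀ 𝒦 = Eᶜ := by
  obtain ⟨K, hKc, hKu⟩ := hd
  obtain ⟨D, hDc, hDd⟩ := TopologicalSpace.exists_countable_dense (ℕ → Bool)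
  obtain ⟨L, hLc, hLs, hLu⟩ := exists_omega1_compact_cover K hKc hKu hDc.isGδ_compl
  -- the compact pieces `L i` have dense complement
  have hLdense : ∀ i, Dense (L i)ᶜ := by
    intro i
    rw [← interior_eq_empty_iff_dense_compl]
    have h1 : interior (L i) ⊆ interior Dᶜ := interior_mono (hLs i)
    have h2 : interior (Dᶜ : Set (ℕ → Bool)) = ∅ := by
      rw [interior_compl, hDd.closure_eq, Set.compl_univ]
    exact Set.subset_eq_empty (h1.trans h2.subset) rfl
  -- diagonal choice of points
  have havoid : ∀ α : Omega1Index, ∃ y, y ∉ D ∧ ∀ β : {β : Omega1Index // β.val < α.val}, y ∉ L β :=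
    by
    intro α
    haveI : Countable {β : Omega1Index // β.val < α.val} := (countable_lt_omega1 α).to_subtype
    exact exists_avoid (fun β : {β : Omega1Index // β.val < α.val} => L β.1)
      (fun β => (hLc β.1).isClosed) (fun β => hLdense β.1) D hDc
  choose x hxD hxL using havoid
  set E : Set (ℕ → Bool) := Set.range x with hE
  have hfiber : ∀ α β, x α ∈ L β → α.val ≤ β.val := by
    intro α β h
    by_contra hlt
    exact hxL α ⟨β, not_le.1 hlt⟩ h
  have hmemL : ∀ α, ∃ β, x α ∈ L β := by
    intro α
    have h1 : x α ∈ Dᶜ := hxD α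
    rw [← hLu] at h1
    exact Set.mem_iUnion.1 h1
  -- cardinality of E
  have hle : Cardinal.mk E ≤ Cardinal.aleph 1 := by
    have h1 := Cardinal.mk_range_le_lift (f := x)
    rw [Cardinal.lift_id'.{0,1}, omega1_mk] at h1
    exact (Cardinal.lift_le.1 h1)
  have hEcard : Cardinal.mk E = Cardinal.aleph 1 := by
    refine le_antisymm hle (not_lt.1 fun hlt => ?_)
    have hEc : E.Countable := (Cardinal.countable_iff_lt_aleph_one E).2 hlt
    have huniv : (Set.univ : Set Omega1Index).Countable := by
      have hcover : (Set.univ : Set Omega1Index) ⊆ ⋃ y ∈ E, x ⁻¹' {y} := by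
        intro α _
        exact Set.mem_biUnion (Set.mem_range_self α) rfl
      refine (Set.Countable.biUnion hEc fun y hy => ?_).mono hcover
      obtain ⟨α₀, hα₀⟩ := hy
      obtain ⟨β₀, hβ₀⟩ := hmemL α₀
      rw [hα₀] at hβ₀
      refine (countable_le_omega1 β₀).mono ?_
      intro α hα
      exact hfiber α β₀ (by rw [Set.mem_preimage, Set.mem_singleton_iff] at hα; rw [hα]; exact hβ₀)
    rw [Set.countable_univ_iff] at huniv
    have h2 : Cardinal.mk Omega1Index ≤ Cardinal.aleph0 := Cardinal.mk_le_aleph0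
    rw [omega1_mk] at h2
    have h3 : Cardinal.aleph0 < Cardinal.lift.{1,0} (Cardinal.aleph (1 : Ordinal.{0})) := by
      rw [← Cardinal.lift_aleph0.{1,0}]
      exact Cardinal.lift_lt.2 Cardinal.aleph0_lt_aleph_one
    exact absurd h2 (not_le.2 h3)
  -- E meets each L β in a countable set
  have hLE : ∀ β, (E ∩ L β).Countable := by
    intro β
    have hsub : E ∩ L β ⊆ x '' {α : Omega1Index | α.val ≤ β.val} := by
      rintro y ⟨⟨α, rfl⟩, hyL⟩
      exact ⟨α, hfiber α β hyL, rfl⟩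
    exact ((countable_le_omega1 β).image x).mono hsub
  have hGδ : ∀ β : Omega1Index, IsGδ (L β \ E) := by
    intro β
    have h1 : L β \ E = L β ∩ (E ∩ L β)ᶜ := by
      ext y
      simp only [Set.mem_diff, Set.mem_inter_iff, Set.mem_compl_iff]
      tauto
    rw [h1]
    exact ((hLc β).isClosed.isGδ).inter (hLE β).isGδ_compl
  choose T hTc hTs hTu using fun β => exists_omega1_compact_cover K hKc hKu (hGδ β)
  refine ⟨E, hEcard,
    (Set.range fun p : Omega1Index × Omega1Index => T p.1 p.2) ∪
      ((fun d => ({d} : Set (ℕ → Bool))) '' D), ?_, ?_, ?_⟩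
  · -- cardinality bound
    refine le_trans (Cardinal.mk_union_le _ _) ?_
    have h1 : Cardinal.mk (Set.range fun p : Omega1Index × Omega1Index => T p.1 p.2) ≤
        Cardinal.aleph 1 := by
      have h2 := Cardinal.mk_range_le_lift (f := fun p : Omega1Index × Omega1Index => T p.1 p.2)
      rw [Cardinal.lift_id'.{0,1}] at h2
      have h3 : Cardinal.mk (Omega1Index × Omega1Index) =
          Cardinal.lift.{1,0} (Cardinal.aleph (1 : Ordinal.{0})) := by
        rw [Cardinal.mk_prod, Cardinal.lift_id'.{1,1}, omega1_mk,
          ← Cardinal.lift_mul, Cardinal.mul_eq_self (Cardinal.aleph0_le_aleph (1 : Ordinal.{0}))]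
      rw [h3] at h2
      exact Cardinal.lift_le.1 h2
    have h4 : Cardinal.mk ((fun d => ({d} : Set (ℕ → Bool))) '' D) ≤ Cardinal.aleph 1 :=
      le_trans (Cardinal.mk_le_aleph0_iff.2 (hDc.image _).to_subtype)
        (Cardinal.aleph0_le_aleph (1 : Ordinal.{0}))
    calc _ ≤ Cardinal.aleph 1 + Cardinal.aleph 1 := add_le_add h1 h4
      _ = Cardinal.aleph 1 := Cardinal.add_eq_self (Cardinal.aleph0_le_aleph (1 : Ordinal.{0}))
  · -- compactness
    rintro C (⟨⟨β, i⟩, rfl⟩ | ⟨d, _, rfl⟩)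
    · exact hTc β i
    · exact isCompact_singleton
  · -- the union is the complement of E
    apply subset_antisymm
    · rintro y ⟨C, (⟨⟨β, i⟩, rfl⟩ | ⟨d, hdD, rfl⟩), hyC⟩
      · exact fun hyE => ((hTs β i hyC).2 hyE)
      · rw [Set.mem_singleton_iff] at hyC
        subst hyC
        rintro ⟨α, rfl⟩
        exact hxD α hdD
    · intro y hyE
      by_cases hyD : y ∈ D
      · exact ⟨{y}, Or.inr ⟨y, hyD, rfl⟩, rfl⟩
      · have h1 : y ∈ Dᶜ := hyD
        rw [← hLu] at h1
        obtain ⟨β, hβ⟩ := Set.mem_iUnion.1 h1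
        have h2 : y ∈ L β \ E := ⟨hβ, hyE⟩
        rw [← hTu β] at h2
        obtain ⟨i, hi⟩ := Set.mem_iUnion.1 h2
        exact ⟨T β i, Or.inl ⟨⟨β, i⟩, rfl⟩, hi⟩
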